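/- For ω > 0 and -2√ω < c < 2√ω, the soliton profile φ_{ω,c} of the derivative NLS satisfies ‖φ_{ω,c}‖²_{L²} = 8 arctan(√((2√ω+c)/(2√ω-c))). -/

import Mathlib

open Real MeasureTheory Set Filter Topology
set_option maxHeartbeats 1000000


/-- The real soliton profile `ϕ_{ω,c}` of the derivative NLS. -/
noncomputable def varphi (ω c x : ℝ) : ℝ :=
  (Real.sqrt ω / (4 * ω - c ^ 2)
      * (Real.cosh (x * Real.sqrt (4 * ω - c ^ 2)) - c / (2 * Real.sqrt ω)))
    ^ (-(1 / 2 : ℝ))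

lemma integrable_exp_neg_abs {κ : ℝ} (hκ : 0 < κ) :
    Integrable (fun x : ℝ => Real.exp (-(κ * |x|))) := by
  have h1 : IntegrableOn (fun x : ℝ => Real.exp (-(κ * |x|))) (Ici 0) := by
    rw [integrableOn_Ici_iff_integrableOn_Ioi]
    exact (exp_neg_integrableOn_Ioi 0 hκ).congr_fun
      (fun x hx => by dsimp only; rw [neg_mul, abs_of_pos hx]) measurableSet_Ioi
  have h2 : IntegrableOn (fun x : ℝ => Real.exp (-(κ * |x|))) (Iic 0) := by
    have h3 := (h1.integrable_indicator measurableSet_Ici).comp_neg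
    rw [← integrable_indicator_iff measurableSet_Iic]
    refine h3.congr (Filter.Eventually.of_forall fun x => ?_)
    show (Ici (0:ℝ)).indicator (fun x => Real.exp (-(κ * |x|))) (-x)
        = (Iic (0:ℝ)).indicator (fun x => Real.exp (-(κ * |x|))) x
    by_cases hx : x ∈ Iic (0:ℝ)
    · have hx' : -x ∈ Ici (0:ℝ) := by simpa using hx
      rw [indicator_of_mem hx, indicator_of_mem hx', abs_neg]
    · have hx' : -x ∉ Ici (0:ℝ) := by simpa using hx
      rw [indicator_of_notMem hx, indicator_of_notMem hx']
  rw [← integrableOn_univ, ← Iic_union_Ioi (a := (0:ℝ))]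
  exact h2.union (h1.mono_set Ioi_subset_Ici_self)

lemma key_id (a b m E κ : ℝ) (hE : 0 < E) (hden : 0 < a * ((E + E⁻¹)/2) - b)
    (h1 : m * (a - b) * 2 = κ) (h2 : m^2 * (a - b) = a + b) :
    κ^2/(a*((E+E⁻¹)/2) - b)
      = 4 * (1/(1 + (m*(1-2/(E+1)))^2) * (m * (2*(E*κ)/(E+1)^2))) := by
  have hE1 : (0:ℝ) < E + 1 := by linarith
  have hEne : E ≠ 0 := ne_of_gt hE
  have hDD : (0:ℝ) < (E+1)^2 + (m*(E-1))^2 := by positivity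
  have hnum : a * ((E + E⁻¹)/2) - b = (a*E^2 - 2*b*E + a)/(2*E) := by
    field_simp; ring
  have hnum' : 0 < a*E^2 - 2*b*E + a := by
    have h := hden; rw [hnum] at h
    rcases div_pos_iff.mp h with ⟨h', _⟩ | ⟨_, h''⟩
    · exact h'
    · linarith
  have hRHS : 4 * (1/(1 + (m*(1-2/(E+1)))^2) * (m * (2*(E*κ)/(E+1)^2)))
      = 8*m*E*κ / ((E+1)^2 + (m*(E-1))^2) := by
    rw [eq_div_iff (ne_of_gt hDD)]
    field_simp
    ring
  rw [hRHS, hnum, div_div_eq_mul_div, div_eq_div_iff (ne_of_gt hnum') (ne_of_gt hDD)]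
  subst h1
  linear_combination (8*E*(E-1)^2*m^2*(a-b)) * h2

/-- `‖φ_{ω,c}‖²_{L²} = ∫ ϕ_{ω,c}² = 8 arctan(√((2√ω+c)/(2√ω-c)))`. -/
theorem stmt9 (ω c : ℝ) (hω : 0 < ω)
    (hc1 : -2 * Real.sqrt ω < c) (hc2 : c < 2 * Real.sqrt ω) :
    (∫ x, (varphi ω c x) ^ 2)
      = 8 * Real.arctan (Real.sqrt ((2 * Real.sqrt ω + c) / (2 * Real.sqrt ω - c))) := by
  set a := Real.sqrt ω with ha_def
  have ha : 0 < a := Real.sqrt_pos.mpr hω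
  have ha2 : a ^ 2 = ω := Real.sq_sqrt hω.le
  set b := c / 2 with hb_def
  have hb : |b| < a := by rw [abs_lt]; constructor <;> [linarith; linarith]
  have hba : b < a := (le_abs_self b).trans_lt hb
  have hba' : -a < b := by have := neg_abs_le b; linarith
  have hc4 : c ^ 2 < 4 * ω := by nlinarith [sq_nonneg (c - 2*a), sq_nonneg (c + 2*a)]
  set κ := Real.sqrt (4 * ω - c ^ 2) with hκ_def
  have hκ : 0 < κ := Real.sqrt_pos.mpr (by linarith)
  have hκ2 : κ ^ 2 = 4 * ω - c ^ 2 := Real.sq_sqrt (by linarith)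
  set m := Real.sqrt ((2 * a + c) / (2 * a - c)) with hm_def
  have hm : 0 ≤ m := Real.sqrt_nonneg _
  have hm2 : m ^ 2 = (2 * a + c) / (2 * a - c) :=
    Real.sq_sqrt (div_nonneg (by linarith) (by linarith))
  have hm2' : m ^ 2 * (2 * a - c) = 2 * a + c := by
    rw [hm2, div_mul_eq_mul_div, mul_div_assoc,
      div_self (by linarith : (2:ℝ) * a - c ≠ 0), mul_one]
  have hmab : m * (2 * a - c) = κ := by
    have h1 : (m * (2 * a - c)) ^ 2 = κ ^ 2 := by
      rw [mul_pow, hκ2]; nlinarith [hm2', ha2]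
    nlinarith [h1, mul_nonneg hm (by linarith : (0:ℝ) ≤ 2 * a - c), hκ]
  -- the denominator is positive everywhere
  have hden : ∀ x : ℝ, 0 < a * Real.cosh (x * κ) - b := fun x => by
    nlinarith [Real.one_le_cosh (x * κ), (abs_lt.mp hb).2]
  -- Step 1 : pointwise formula for varphi ^ 2
  have hsq : ∀ x : ℝ, varphi ω c x ^ 2 = κ ^ 2 / (a * Real.cosh (x * κ) - b) := by
    intro x
    have hXpos : 0 < Real.sqrt ω / (4 * ω - c ^ 2)
        * (Real.cosh (x * Real.sqrt (4 * ω - c ^ 2)) - c / (2 * Real.sqrt ω)) := by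
      rw [← ha_def, ← hκ_def]
      have h1 : c / (2 * a) < 1 := by rw [div_lt_one (by linarith)]; linarith
      have h2 := Real.one_le_cosh (x * κ)
      have : (0:ℝ) < a / (4 * ω - c ^ 2) := div_pos ha (by linarith)
      exact mul_pos this (by linarith)
    rw [varphi]
    rw [← Real.rpow_natCast _ 2, ← Real.rpow_mul hXpos.le]
    norm_num
    rw [Real.rpow_neg_one, ← ha_def, ← hκ_def]
    rw [eq_div_iff (ne_of_gt (hden x)), inv_mul_eq_div, div_eq_iff (ne_of_gt hXpos)]
    have : 4 * ω - c ^ 2 = κ ^ 2 := hκ2.symm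
    rw [this]
    field_simp
    rw [← ha_def, Real.sqrt_sq hκ.le, hb_def]; ring
  -- the antiderivative
  set F : ℝ → ℝ := fun x => 4 * Real.arctan (m * (1 - 2 / (Real.exp (x * κ) + 1))) with hF_def
  set f' : ℝ → ℝ := fun x => κ ^ 2 / (a * Real.cosh (x * κ) - b) with hf'_def
  -- derivative computation
  have hderiv : ∀ x : ℝ, HasDerivAt F (f' x) x := by
    intro x
    set E := Real.exp (x * κ) with hE_def
    have hE : 0 < E := Real.exp_pos _
    have hE1 : E + 1 ≠ 0 := by positivity
    have d1 : HasDerivAt (fun y : ℝ => y * κ) κ x := by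
      simpa using (hasDerivAt_id x).mul_const κ
    have d2 : HasDerivAt (fun y : ℝ => Real.exp (y * κ) + 1) (E * κ) x := (d1.exp).add_const 1
    have d3 : HasDerivAt (fun y : ℝ => 2 / (Real.exp (y * κ) + 1))
        (-(2 * (E * κ)) / (E + 1) ^ 2) x := by
      exact ((hasDerivAt_const x (2:ℝ)).div d2 hE1).congr_deriv (by rw [hE_def]; ring)
    have d4 : HasDerivAt (fun y : ℝ => m * (1 - 2 / (Real.exp (y * κ) + 1)))
        (m * (2 * (E * κ) / (E + 1) ^ 2)) x := by
      have := ((hasDerivAt_const x (1:ℝ)).sub d3).const_mul m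
      exact this.congr_deriv (by ring)
    have d5 := d4.arctan.const_mul (4:ℝ)
    refine d5.congr_deriv ?_; symm
    show κ ^ 2 / (a * Real.cosh (x * κ) - b) = _
    have hcosh : Real.cosh (x * κ) = (E + E⁻¹) / 2 := by
      rw [Real.cosh_eq, hE_def, ← Real.exp_neg]
    rw [hcosh]
    have hde2 : 0 < a * ((E + E⁻¹) / 2) - b := by
      have := hden x; rw [hcosh] at this; linarith
    exact key_id a b m E κ hE hde2 (by rw [← hmab, hb_def]; ring)
      (by rw [hb_def]; linarith [hm2'])
  -- limits at ±∞
  have harc : Continuous Real.arctan := Real.continuous_arctan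
  have htop : Tendsto F atTop (𝓝 (4 * Real.arctan m)) := by
    have h1 : Tendsto (fun x : ℝ => x * κ) atTop atTop :=
      Tendsto.atTop_mul_const hκ tendsto_id
    have h2 : Tendsto (fun x : ℝ => Real.exp (x * κ) + 1) atTop atTop :=
      tendsto_atTop_add_const_right _ 1 (Real.tendsto_exp_atTop.comp h1)
    have h3 : Tendsto (fun x : ℝ => 2 / (Real.exp (x * κ) + 1)) atTop (𝓝 0) :=
      Tendsto.div_atTop tendsto_const_nhds h2
    have h4 : Tendsto (fun x : ℝ => m * (1 - 2 / (Real.exp (x * κ) + 1))) atTop (𝓝 m) := by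
      have := (tendsto_const_nhds (x := (1:ℝ)) (f := atTop)).sub h3
      have h5 := (tendsto_const_nhds (x := m) (f := atTop (α := ℝ))).mul this
      simpa using h5
    have := ((harc.tendsto m).comp h4).const_mul (4:ℝ)
    simpa [hF_def, Function.comp] using this
  have hbot : Tendsto F atBot (𝓝 (-(4 * Real.arctan m))) := by
    have h1 : Tendsto (fun x : ℝ => x * κ) atBot atBot :=
      Tendsto.atBot_mul_const hκ tendsto_id
    have h2 : Tendsto (fun x : ℝ => Real.exp (x * κ)) atBot (𝓝 0) :=
      Real.tendsto_exp_atBot.comp h1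
    have h3 : Tendsto (fun x : ℝ => 2 / (Real.exp (x * κ) + 1)) atBot (𝓝 2) := by
      have h2' : Tendsto (fun x : ℝ => Real.exp (x * κ) + 1) atBot (𝓝 1) := by
        simpa using h2.add (tendsto_const_nhds (x := (1:ℝ)))
      have := (tendsto_const_nhds (x := (2:ℝ)) (f := atBot (α := ℝ))).div h2' one_ne_zero
      rw [div_one] at this; exact this
    have h4 : Tendsto (fun x : ℝ => m * (1 - 2 / (Real.exp (x * κ) + 1))) atBot (𝓝 (-m)) := by
      have := (tendsto_const_nhds (x := (1:ℝ)) (f := atBot (α := ℝ))).sub h3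
      have h5 := (tendsto_const_nhds (x := m) (f := atBot (α := ℝ))).mul this
      have : m * (1 - 2) = -m := by ring
      rwa [this] at h5
    have := ((harc.tendsto (-m)).comp h4).const_mul (4:ℝ)
    simpa [hF_def, Function.comp, Real.arctan_neg] using this
  -- integrability
  have hcont : Continuous f' := by
    apply continuous_const.div
    · exact (continuous_const.mul (Real.continuous_cosh.comp (continuous_id.mul continuous_const))).sub continuous_const
    · exact fun x => ne_of_gt (hden x)
  have hint : Integrable f' := by
    set C : ℝ := 2 * κ ^ 2 / (a - |b|) with hC_def
    have hab : (0:ℝ) < a - |b| := by linarith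
    have hC : 0 ≤ C := div_nonneg (by positivity) hab.le
    refine ((integrable_exp_neg_abs hκ).const_mul C).mono' hcont.aestronglyMeasurable
      (Filter.Eventually.of_forall fun x => ?_)
    have h1 : Real.exp (κ * |x|) / 2 ≤ Real.cosh (x * κ) := by
      rw [Real.cosh_eq]
      rcases abs_cases x with ⟨h, _⟩ | ⟨h, _⟩
      · rw [h]; have := (Real.exp_pos (-(x * κ))).le; rw [mul_comm]; linarith
      · rw [h]
        have := (Real.exp_pos (x * κ)).le
        have : Real.exp (κ * -x) = Real.exp (-(x * κ)) := by ring_nf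
        rw [this]; linarith [(Real.exp_pos (x * κ)).le]
    have h2 : (a - |b|) * (Real.exp (κ * |x|) / 2) ≤ a * Real.cosh (x * κ) - b := by
      have h3 : (a - |b|) * Real.cosh (x * κ) ≤ a * Real.cosh (x * κ) - b := by
        have := Real.one_le_cosh (x * κ)
        nlinarith [le_abs_self b, abs_nonneg b]
      calc (a - |b|) * (Real.exp (κ * |x|) / 2) ≤ (a - |b|) * Real.cosh (x * κ) := by
            apply mul_le_mul_of_nonneg_left h1 (by linarith)
        _ ≤ _ := h3
    have h4 : 0 < Real.exp (κ * |x|) / 2 := by positivity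
    have h5 : (0:ℝ) < a - |b| := by linarith
    rw [Real.norm_eq_abs, hf'_def, abs_of_pos (div_pos (by positivity) (hden x))]
    rw [div_le_iff₀ (hden x)]
    have h6 : C * Real.exp (-(κ * |x|)) * ((a - |b|) * (Real.exp (κ * |x|) / 2)) = κ ^ 2 := by
      have e1 : Real.exp (-(κ*|x|)) * Real.exp (κ*|x|) = 1 := by
        rw [← Real.exp_add]; simp
      have e2 : C * (a - |b|) / 2 = κ ^ 2 := by
        rw [hC_def]; field_simp
      calc C * Real.exp (-(κ * |x|)) * ((a - |b|) * (Real.exp (κ * |x|) / 2))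
          = C * (a - |b|) / 2 * (Real.exp (-(κ*|x|)) * Real.exp (κ*|x|)) := by ring
        _ = κ ^ 2 := by rw [e1, mul_one, e2]
    calc κ ^ 2 = C * Real.exp (-(κ * |x|)) * ((a - |b|) * (Real.exp (κ * |x|) / 2)) := h6.symm
      _ ≤ C * Real.exp (-(κ * |x|)) * (a * Real.cosh (x * κ) - b) := by
          apply mul_le_mul_of_nonneg_left h2 (by positivity)
  -- assemble
  have key : (∫ x, f' x) = 4 * Real.arctan m - -(4 * Real.arctan m) :=
    MeasureTheory.integral_of_hasDerivAt_of_tendsto hderiv hint hbot htop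
  have : (∫ x, varphi ω c x ^ 2) = ∫ x, f' x := by
    congr 1; funext x; exact hsq x
  rw [this, key]; ring
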